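/- Let a, b, ν be real numbers and define q : (0, π) → ℝ by q(t) = (ν + (a+b+1)/2)² + (1/4 - a²)/(4 sin²(t/2)) + (1/4 - b²)/(4 cos²(t/2)). Suppose Y : ℝ → ℝ is twice differentiable on (-1, 1) and satisfies Jacobi's differential equation (1 - x²) Y''(x) + (b - a - (a+b+2)x) Y'(x) + ν(ν + a + b + 1) Y(x) = 0 for all x ∈ (-1, 1). Define y : (0, π) → ℝ by y(t) = Y(cos t) · (sin(t/2))^{a + 1/2} · (cos(t/2))^{b + 1/2}. Then y is twice differentiable on (0, π) and y''(t) + q(t) y(t) = 0 for all t ∈ (0, π). -/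

import Mathlib

set_option maxHeartbeats 2000000


/-- The Liouville-normal-form trigonometric transformation of Jacobi's
differential equation: if `Y` is twice differentiable on `(-1, 1)` and satisfies
`(1 - x²) Y'' + (b - a - (a+b+2)x) Y' + ν(ν+a+b+1) Y = 0` there, then
`y(t) = Y(cos t) (sin(t/2))^{a+1/2} (cos(t/2))^{b+1/2}` is twice differentiable
on `(0, π)` and satisfies `y'' + q y = 0`, where
`q(t) = (ν + (a+b+1)/2)² + (1/4 - a²)/(4 sin²(t/2)) + (1/4 - b²)/(4 cos²(t/2))`. -/
theorem jacobi_ode_trig_normal_form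
    (a b ν : ℝ) (Y Y' Y'' : ℝ → ℝ)
    (hY : ∀ x ∈ Set.Ioo (-1 : ℝ) 1, HasDerivAt Y (Y' x) x)
    (hY' : ∀ x ∈ Set.Ioo (-1 : ℝ) 1, HasDerivAt Y' (Y'' x) x)
    (hode : ∀ x ∈ Set.Ioo (-1 : ℝ) 1,
      (1 - x ^ 2) * Y'' x + (b - a - (a + b + 2) * x) * Y' x
        + ν * (ν + a + b + 1) * Y x = 0) :
    ∃ y' y'' : ℝ → ℝ, ∀ t ∈ Set.Ioo (0 : ℝ) Real.pi,
      HasDerivAt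
        (fun s => Y (Real.cos s) * Real.sin (s / 2) ^ (a + 1 / 2) *
          Real.cos (s / 2) ^ (b + 1 / 2)) (y' t) t ∧
      HasDerivAt y' (y'' t) t ∧
      y'' t +
        ((ν + (a + b + 1) / 2) ^ 2
          + (1 / 4 - a ^ 2) / (4 * Real.sin (t / 2) ^ 2)
          + (1 / 4 - b ^ 2) / (4 * Real.cos (t / 2) ^ 2)) *
        (Y (Real.cos t) * Real.sin (t / 2) ^ (a + 1 / 2) *
          Real.cos (t / 2) ^ (b + 1 / 2)) = 0 := by
  refine ⟨fun t =>
      -Real.sin t * Y' (Real.cos t) *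
        (Real.sin (t / 2) ^ (a + 1 / 2) * Real.cos (t / 2) ^ (b + 1 / 2))
      + Y (Real.cos t) *
        (Real.sin (t / 2) ^ (a + 1 / 2) * Real.cos (t / 2) ^ (b + 1 / 2)) *
        ((a + 1 / 2) * Real.cos (t / 2) / (2 * Real.sin (t / 2))
          - (b + 1 / 2) * Real.sin (t / 2) / (2 * Real.cos (t / 2))),
    fun t =>
      (Real.sin t ^ 2 * Y'' (Real.cos t) - Real.cos t * Y' (Real.cos t)) *
        (Real.sin (t / 2) ^ (a + 1 / 2) * Real.cos (t / 2) ^ (b + 1 / 2))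
      + 2 * (-Real.sin t * Y' (Real.cos t)) *
        (Real.sin (t / 2) ^ (a + 1 / 2) * Real.cos (t / 2) ^ (b + 1 / 2)) *
        ((a + 1 / 2) * Real.cos (t / 2) / (2 * Real.sin (t / 2))
          - (b + 1 / 2) * Real.sin (t / 2) / (2 * Real.cos (t / 2)))
      + Y (Real.cos t) *
        (Real.sin (t / 2) ^ (a + 1 / 2) * Real.cos (t / 2) ^ (b + 1 / 2)) *
        (((a + 1 / 2) * Real.cos (t / 2) / (2 * Real.sin (t / 2))
            - (b + 1 / 2) * Real.sin (t / 2) / (2 * Real.cos (t / 2))) ^ 2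
          + (-((a + 1 / 2) * (Real.sin (t / 2) ^ 2 + Real.cos (t / 2) ^ 2))
              / (4 * Real.sin (t / 2) ^ 2)
            - ((b + 1 / 2) * (Real.sin (t / 2) ^ 2 + Real.cos (t / 2) ^ 2))
              / (4 * Real.cos (t / 2) ^ 2))),
    fun t ht => ?_⟩
  obtain ⟨ht0, htp⟩ := ht
  have hS : 0 < Real.sin (t / 2) :=
    Real.sin_pos_of_pos_of_lt_pi (by linarith) (by linarith [Real.pi_pos])
  have hC : 0 < Real.cos (t / 2) :=
    Real.cos_pos_of_mem_Ioo ⟨by linarith [Real.pi_pos], by linarith [Real.pi_pos]⟩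
  have pyth : Real.sin (t / 2) ^ 2 + Real.cos (t / 2) ^ 2 = 1 :=
    Real.sin_sq_add_cos_sq _
  have hsin2 : Real.sin t = 2 * Real.sin (t / 2) * Real.cos (t / 2) := by
    have h := Real.sin_two_mul (t / 2)
    rwa [show 2 * (t / 2) = t by ring] at h
  have hcos2 : Real.cos t = 2 * Real.cos (t / 2) ^ 2 - 1 := by
    have h := Real.cos_two_mul (t / 2)
    rwa [show 2 * (t / 2) = t by ring] at h
  have hmem : Real.cos t ∈ Set.Ioo (-1 : ℝ) 1 := by
    constructor
    · rw [hcos2]; nlinarith [mul_pos hC hC]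
    · rw [hcos2]; nlinarith [mul_pos hS hS]
  have hhalf : HasDerivAt (fun s : ℝ => s / 2) (1 / 2) t := (hasDerivAt_id t).div_const 2
  have hs : HasDerivAt (fun s => Real.sin (s / 2)) (Real.cos (t / 2) * (1 / 2)) t :=
    (Real.hasDerivAt_sin (t / 2)).comp (h₂ := Real.sin) t hhalf
  have hc : HasDerivAt (fun s => Real.cos (s / 2)) (-Real.sin (t / 2) * (1 / 2)) t :=
    (Real.hasDerivAt_cos (t / 2)).comp (h₂ := Real.cos) t hhalf
  have hsp : HasDerivAt (fun s => Real.sin (s / 2) ^ (a + 1 / 2))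
      ((Real.cos (t / 2) * (1 / 2)) * (a + 1 / 2) * Real.sin (t / 2) ^ (a + 1 / 2 - 1)) t :=
    hs.rpow_const (Or.inl hS.ne')
  have hcp : HasDerivAt (fun s => Real.cos (s / 2) ^ (b + 1 / 2))
      ((-Real.sin (t / 2) * (1 / 2)) * (b + 1 / 2) * Real.cos (t / 2) ^ (b + 1 / 2 - 1)) t :=
    hc.rpow_const (Or.inl hC.ne')
  have hrs : Real.sin (t / 2) ^ (a + 1 / 2 - 1)
      = Real.sin (t / 2) ^ (a + 1 / 2) / Real.sin (t / 2) := by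
    rw [Real.rpow_sub hS, Real.rpow_one]
  have hrc : Real.cos (t / 2) ^ (b + 1 / 2 - 1)
      = Real.cos (t / 2) ^ (b + 1 / 2) / Real.cos (t / 2) := by
    rw [Real.rpow_sub hC, Real.rpow_one]
  have hcos : HasDerivAt Real.cos (-Real.sin t) t := Real.hasDerivAt_cos t
  have hYc : HasDerivAt (fun s => Y (Real.cos s)) (Y' (Real.cos t) * -Real.sin t) t :=
    (hY _ hmem).comp t hcos
  have hY'c : HasDerivAt (fun s => Y' (Real.cos s)) (Y'' (Real.cos t) * -Real.sin t) t :=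
    (hY' _ hmem).comp t hcos
  have hgp : HasDerivAt (fun s => Real.sin (s / 2) ^ (a + 1 / 2) * Real.cos (s / 2) ^ (b + 1 / 2))
      (((Real.cos (t / 2) * (1 / 2)) * (a + 1 / 2) * Real.sin (t / 2) ^ (a + 1 / 2 - 1))
          * Real.cos (t / 2) ^ (b + 1 / 2)
        + Real.sin (t / 2) ^ (a + 1 / 2) *
          ((-Real.sin (t / 2) * (1 / 2)) * (b + 1 / 2) * Real.cos (t / 2) ^ (b + 1 / 2 - 1))) t :=
    hsp.mul hcp
  have hH : HasDerivAt (fun s =>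
      (a + 1 / 2) * Real.cos (s / 2) / (2 * Real.sin (s / 2))
        - (b + 1 / 2) * Real.sin (s / 2) / (2 * Real.cos (s / 2)))
      ((((a + 1 / 2) * (-Real.sin (t / 2) * (1 / 2))) * (2 * Real.sin (t / 2))
          - ((a + 1 / 2) * Real.cos (t / 2)) * (2 * (Real.cos (t / 2) * (1 / 2))))
          / (2 * Real.sin (t / 2)) ^ 2
        - (((b + 1 / 2) * (Real.cos (t / 2) * (1 / 2))) * (2 * Real.cos (t / 2))
          - ((b + 1 / 2) * Real.sin (t / 2)) * (2 * (-Real.sin (t / 2) * (1 / 2))))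
          / (2 * Real.cos (t / 2)) ^ 2) t :=
    ((hc.const_mul (a + 1 / 2)).div (hs.const_mul 2) (by positivity)).sub
      ((hs.const_mul (b + 1 / 2)).div (hc.const_mul 2) (by positivity))
  refine ⟨?_, ?_, ?_⟩
  · have h1 := (hYc.mul hsp).mul hcp
    refine h1.congr_deriv ?_
    symm
    simp only [Pi.mul_apply, Pi.add_apply, Pi.neg_apply]
    rw [hrs, hrc]
    field_simp [hS.ne', hC.ne']
    ring
  · have h2 := ((((Real.hasDerivAt_sin t).neg.mul hY'c).mul hgp).add
      ((hYc.mul hgp).mul hH))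
    refine h2.congr_deriv ?_
    symm
    simp only [Pi.mul_apply, Pi.add_apply, Pi.neg_apply]
    rw [hrs, hrc]
    field_simp [hS.ne', hC.ne']
    ring
  · have hode' := hode _ hmem
    rw [hcos2] at hode'
    beta_reduce
    rw [hsin2, hcos2]
    field_simp [hS.ne', hC.ne']
    have hs2 : Real.sin (t / 2) ^ 2 = 1 - Real.cos (t / 2) ^ 2 := by linarith
    rw [hs2]
    linear_combination (256 * Real.sin (t / 2) ^ ((2 * a + 1) / 2) * Real.cos (t / 2) ^ ((2 * b + 1) / 2) * (1 - Real.cos (t / 2) ^ 2) * Real.cos (t / 2) ^ 2) * hode'
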